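/- Let C be a tensor category with no zero-divisors, equipped with a conjugation (anti-monoidal involution on objects). Then: (a) any right absorbing object is absorbing; (b) any absorbing object X satisfies X ⊕ X ≅ X; (c) any two absorbing objects are isomorphic; (d) an absorbing object is isomorphic to its conjugate. -/

import Mathlib

open CategoryTheory MonoidalCategory Limits

/-- A nonzero object `X` is right absorbing if `X ⊗ Y ≅ X` for every nonzero `Y`. -/
def RightAbsorbing {C : Type*} [Category C] [MonoidalCategory C] (X : C) : Prop :=
  ¬ IsZero X ∧ ∀ Y : C, ¬ IsZero Y → Nonempty (X ⊗ Y ≅ X)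

/-- A nonzero object `X` is left absorbing if `Y ⊗ X ≅ X` for every nonzero `Y`. -/
def LeftAbsorbing {C : Type*} [Category C] [MonoidalCategory C] (X : C) : Prop :=
  ¬ IsZero X ∧ ∀ Y : C, ¬ IsZero Y → Nonempty (Y ⊗ X ≅ X)

/-- An object is absorbing if it is both right and left absorbing. -/
def Absorbing {C : Type*} [Category C] [MonoidalCategory C] (X : C) : Prop :=
  RightAbsorbing X ∧ LeftAbsorbing X

/-- Let `C` be a tensor category (with direct sums and additive tensor product) with no
zero-divisors, equipped with a conjugation (anti-monoidal involution on objects).  Then: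
(a) any right absorbing object is absorbing; (b) any absorbing object `X` satisfies
`X ⊕ X ≅ X`; (c) any two absorbing objects are isomorphic; (d) an absorbing object is
isomorphic to its conjugate. -/
theorem stmt9 {C : Type*} [Category C] [MonoidalCategory C] [Preadditive C]
    [MonoidalPreadditive C] [HasBinaryBiproducts C]
    (hnzd_left : ∀ X : C, ¬ IsZero X →
      ∀ {Y₁ Y₂ : C} (f g : Y₁ ⟶ Y₂), 𝟙 X ⊗ₘ f = 𝟙 X ⊗ₘ g → f = g)
    (hnzd_right : ∀ X : C, ¬ IsZero X →
      ∀ {Y₁ Y₂ : C} (f g : Y₁ ⟶ Y₂), f ⊗ₘ 𝟙 X = g ⊗ₘ 𝟙 X → f = g)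
    (conj : C ⥤ C)
    (hconj_mon : ∀ X Y : C, Nonempty (conj.obj (X ⊗ Y) ≅ conj.obj Y ⊗ conj.obj X))
    (hconj_inv : ∀ X : C, Nonempty (conj.obj (conj.obj X) ≅ X))
    (hconj_zero : ∀ X : C, IsZero (conj.obj X) ↔ IsZero X) :
    (∀ X : C, RightAbsorbing X → Absorbing X)
    ∧ (∀ X : C, Absorbing X → Nonempty (X ⊞ X ≅ X))
    ∧ (∀ X Y : C, Absorbing X → Absorbing Y → Nonempty (X ≅ Y))
    ∧ (∀ X : C, Absorbing X → Nonempty (X ≅ conj.obj X)) := by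
  -- conj of a right absorbing object is left absorbing
  have hconjL : ∀ X : C, RightAbsorbing X → LeftAbsorbing (conj.obj X) := by
    rintro X ⟨hX0, hX⟩
    refine ⟨fun h => hX0 ((hconj_zero X).mp h), fun Y hY => ?_⟩
    obtain ⟨e⟩ := hX (conj.obj Y) (fun h => hY ((hconj_zero Y).mp h))
    obtain ⟨m⟩ := hconj_mon X (conj.obj Y)
    obtain ⟨i⟩ := hconj_inv Y
    exact ⟨(whiskerRightIso i (conj.obj X)).symm ≪≫ m.symm ≪≫ conj.mapIso e⟩
  -- a right absorbing object is isomorphic to its conjugate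
  have hself : ∀ X : C, RightAbsorbing X → Nonempty (X ≅ conj.obj X) := by
    intro X hX
    obtain ⟨hc0, hc⟩ := hconjL X hX
    obtain ⟨e1⟩ := hX.2 (conj.obj X) hc0
    obtain ⟨e2⟩ := hc X hX.1
    exact ⟨e1.symm ≪≫ e2⟩
  -- (a)
  have ha : ∀ X : C, RightAbsorbing X → Absorbing X := by
    intro X hX
    refine ⟨hX, hX.1, fun Y hY => ?_⟩
    obtain ⟨s⟩ := hself X hX
    obtain ⟨hc0, hc⟩ := hconjL X hX
    obtain ⟨e⟩ := hc Y hY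
    exact ⟨whiskerLeftIso Y s ≪≫ e ≪≫ s.symm⟩
  refine ⟨ha, ?_, ?_, ?_⟩
  · -- (b)
    rintro X ⟨⟨hX0, hX⟩, _⟩
    have hone : ¬ IsZero (𝟙_ C) := by
      intro h
      apply hX0
      have hz : IsZero ((𝟙_ C) ⊗ X) := by
        rw [IsZero.iff_id_eq_zero]
        have : 𝟙 ((𝟙_ C) ⊗ X) = 𝟙 (𝟙_ C) ⊗ₘ 𝟙 X := by simp
        rw [this, h.eq_zero_of_src (𝟙 (𝟙_ C)), MonoidalPreadditive.zero_tensor]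
      exact hz.of_iso (λ_ X).symm
    have h2 : ¬ IsZero ((𝟙_ C) ⊞ (𝟙_ C)) := by
      intro h
      apply hone
      rw [IsZero.iff_id_eq_zero]
      have : 𝟙 (𝟙_ C) = (biprod.inl : 𝟙_ C ⟶ (𝟙_ C) ⊞ (𝟙_ C)) ≫ biprod.fst := by simp
      rw [this, h.eq_zero_of_src (biprod.fst), comp_zero]
    obtain ⟨e⟩ := hX ((𝟙_ C) ⊞ (𝟙_ C)) h2
    haveI : PreservesBiproductsOfShape WalkingPair (tensorLeft X) :=
      PreservesFiniteBiproducts.preserves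
    haveI : PreservesBinaryBiproducts (tensorLeft X) :=
      preservesBinaryBiproducts_of_preservesBiproducts _
    refine ⟨biprod.mapIso (ρ_ X).symm (ρ_ X).symm ≪≫
      ((tensorLeft X).mapBiprod (𝟙_ C) (𝟙_ C)).symm ≪≫ e⟩
  · -- (c)
    rintro X Y ⟨⟨hX0, hX⟩, _⟩ ⟨_, hY0, hY⟩
    obtain ⟨e1⟩ := hX Y hY0
    obtain ⟨e2⟩ := hY X hX0
    exact ⟨e1.symm ≪≫ e2⟩
  · -- (d)
    rintro X ⟨hXr, _⟩
    exact hself X hXr
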